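/- Let N ≥ 2 and λ > 0. Assume w : ℝ^N → ℝ is continuous, positive, radially symmetric, and satisfies lim_{|x|→∞} w(x)|x|^{(N−1)/2} e^{√λ|x|} = σ for some σ > 0. Assume f : ℝ → ℝ is continuous, nondecreasing, f(t) = 0 for t ≤ 0, and |f(t)| ≤ D(|t|^{p₁} + |t|^{p₂}) for all t, where D > 0 and 1 < p₁ ≤ p₂. Assume ξ : ℝ^N → [0,1] is a C¹ function with ξ ≡ 0 on the ball B_ρ(0) and ξ ≡ 1 on ℝ^N \ B_{2ρ}(0), for some ρ > 0; for θ ∈ ℝ^N and R > 0 set Φ^{Rθ}(x) := ξ(x) w(x − Rθ). Let x₀, y ∈ ℝ^N with |x₀| = 1 and |y − x₀| = 2. Then there is a function η : (0,∞) → [0,∞) with η(R) → 0 as R → ∞ such that for every τ ≥ 0 and every R > 0: | ∫_{ℝ^N} ( f(τ Φ^{Ry}(x)) Φ^{Rx₀}(x) − f(τ w(x − Ry)) w(x − Rx₀) ) dx | ≤ max{τ^{p₁}, τ^{p₂}} η(R) R^{−(N−1)/2} e^{−2R√λ}. -/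

import Mathlib

open MeasureTheory Filter Metric

set_option maxHeartbeats 1000000 in

theorem stmt10 (N : ℕ) (hN : 2 ≤ N) (lam : ℝ) (hlam : 0 < lam)
    (w : EuclideanSpace ℝ (Fin N) → ℝ) (σ : ℝ) (hσ : 0 < σ)
    (hwcont : Continuous w) (hwpos : ∀ x, 0 < w x)
    (hwrad : ∀ x y : EuclideanSpace ℝ (Fin N), ‖x‖ = ‖y‖ → w x = w y)
    (hwlim : Tendsto
      (fun x => w x * ‖x‖ ^ (((N : ℝ) - 1) / 2) * Real.exp (Real.sqrt lam * ‖x‖))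
      (comap (fun x : EuclideanSpace ℝ (Fin N) => ‖x‖) atTop) (nhds σ))
    (f : ℝ → ℝ) (D p₁ p₂ : ℝ) (hD : 0 < D) (hp₁ : 1 < p₁) (hp : p₁ ≤ p₂)
    (hfcont : Continuous f) (hfmono : Monotone f) (hf0 : ∀ t ≤ (0:ℝ), f t = 0)
    (hfgrowth : ∀ t : ℝ, |f t| ≤ D * (|t| ^ p₁ + |t| ^ p₂))
    (ρ : ℝ) (hρ : 0 < ρ)
    (ξ : EuclideanSpace ℝ (Fin N) → ℝ) (hξ : ContDiff ℝ 1 ξ)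
    (hξ01 : ∀ x, ξ x ∈ Set.Icc (0:ℝ) 1)
    (hξ0 : ∀ x ∈ Metric.ball (0 : EuclideanSpace ℝ (Fin N)) ρ, ξ x = 0)
    (hξ1 : ∀ x ∉ Metric.ball (0 : EuclideanSpace ℝ (Fin N)) (2 * ρ), ξ x = 1)
    (x₀ y : EuclideanSpace ℝ (Fin N)) (hx₀ : ‖x₀‖ = 1) (hy : ‖y - x₀‖ = 2) :
    ∃ η : ℝ → ℝ, (∀ R, 0 ≤ η R) ∧ Tendsto η atTop (nhds 0) ∧
      ∀ τ ≥ (0:ℝ), ∀ R > (0:ℝ),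
        |∫ x, (f (τ * (ξ x * w (x - R • y))) * (ξ x * w (x - R • x₀)) -
            f (τ * w (x - R • y)) * w (x - R • x₀))| ≤
          max (τ ^ p₁) (τ ^ p₂) * η R *
            R ^ (-(((N : ℝ) - 1) / 2)) * Real.exp (-(2 * R * Real.sqrt lam)) := by
  set s : ℝ := Real.sqrt lam with hsdef
  have hs0 : 0 < s := Real.sqrt_pos.mpr hlam
  set a : ℝ := ((N : ℝ) - 1) / 2 with hadef
  have ha0 : 0 ≤ a := by
    have : (2:ℝ) ≤ (N:ℝ) := by exact_mod_cast hN
    simp only [hadef]; linarith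
  -- decay bound for w
  obtain ⟨r₀, hr₀1, hdecay⟩ : ∃ r₀ : ℝ, 1 ≤ r₀ ∧
      ∀ z : EuclideanSpace ℝ (Fin N), r₀ ≤ ‖z‖ → w z ≤ (σ + 1) * Real.exp (-(s * ‖z‖)) := by
    have h1 := hwlim.eventually_lt_const (show σ < σ + 1 by linarith)
    rw [Filter.eventually_comap, Filter.eventually_atTop] at h1
    obtain ⟨r, hr⟩ := h1
    refine ⟨max r 1, le_max_right _ _, fun z hz => ?_⟩
    have hz1 : 1 ≤ ‖z‖ := le_trans (le_max_right r 1) hz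
    have h2 := hr ‖z‖ (le_trans (le_max_left r 1) hz) z rfl
    have hna : 1 ≤ ‖z‖ ^ a := Real.one_le_rpow hz1 ha0
    have hw0 : 0 ≤ w z := (hwpos z).le
    have hexp : (0:ℝ) < Real.exp (s * ‖z‖) := Real.exp_pos _
    have key : w z * Real.exp (s * ‖z‖) ≤ σ + 1 := by nlinarith
    have hinv : Real.exp (-(s * ‖z‖)) * Real.exp (s * ‖z‖) = 1 := by
      rw [← Real.exp_add]; simp
    nlinarith
  -- global bound for w
  obtain ⟨M, hM1, hMσ, hMw⟩ : ∃ M : ℝ, 1 ≤ M ∧ σ + 1 ≤ M ∧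
      ∀ z : EuclideanSpace ℝ (Fin N), w z ≤ M := by
    obtain ⟨z₀, _, hz₀⟩ := (isCompact_closedBall (0 : EuclideanSpace ℝ (Fin N)) r₀).exists_isMaxOn
      ⟨0, by simp [le_trans zero_le_one hr₀1]⟩ hwcont.continuousOn
    refine ⟨max (w z₀) (σ + 1) + 1, ?_, ?_, fun z => ?_⟩
    · have := le_max_right (w z₀) (σ + 1); linarith
    · have := le_max_right (w z₀) (σ + 1); linarith
    by_cases hz : z ∈ closedBall (0 : EuclideanSpace ℝ (Fin N)) r₀
    · have h1 : w z ≤ w z₀ := hz₀ hz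
      have h2 : w z₀ ≤ max (w z₀) (σ+1) := le_max_left _ _
      linarith
    · simp only [mem_closedBall, dist_zero_right, not_le] at hz
      have h1 := hdecay z hz.le
      have h2 : Real.exp (-(s * ‖z‖)) ≤ 1 := by
        rw [Real.exp_le_one_iff]
        have : 0 ≤ s * ‖z‖ := mul_nonneg hs0.le (norm_nonneg _)
        linarith
      have h3 : (σ+1) * Real.exp (-(s * ‖z‖)) ≤ σ + 1 := by nlinarith
      have h4 : σ + 1 ≤ max (w z₀) (σ+1) := le_max_right _ _
      linarith
  have hM0 : 0 < M := lt_of_lt_of_le one_pos hM1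
  have hσ1 : (0:ℝ) < σ + 1 := by linarith
  -- volume of the ball
  set V : ℝ := (volume (closedBall (0 : EuclideanSpace ℝ (Fin N)) (2 * ρ))).toReal with hVdef
  have hV0 : 0 ≤ V := ENNReal.toReal_nonneg
  set R₀ : ℝ := r₀ + 2 * ρ with hR₀def
  have hR₀pos : 0 < R₀ := by have := hρ; have := hr₀1; simp only [hR₀def]; linarith
  set c : ℝ := (p₁ - 1) * s with hcdef
  have hc0 : 0 < c := mul_pos (by linarith) hs0
  set C₂ : ℝ := V * D * (1 + M ^ (p₂ - p₁)) * (σ + 1) ^ p₁ * (σ + 1) *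
      Real.exp ((p₁ + 1) * (s * (2 * ρ))) with hC₂def
  set C₃ : ℝ := V * D * (M ^ p₁ + M ^ p₂) * M * Real.exp ((p₁ + 1) * (s * R₀)) with hC₃def
  have hC₂0 : 0 ≤ C₂ := by
    have h1 : (0:ℝ) ≤ M ^ (p₂ - p₁) := Real.rpow_nonneg hM0.le _
    have h2 : (0:ℝ) ≤ (σ+1) ^ p₁ := Real.rpow_nonneg hσ1.le _
    have := Real.exp_pos ((p₁ + 1) * (s * (2 * ρ)))
    simp only [hC₂def]; positivity
  have hC₃0 : 0 ≤ C₃ := by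
    have h1 : (0:ℝ) ≤ M ^ p₁ := Real.rpow_nonneg hM0.le _
    have h2 : (0:ℝ) ≤ M ^ p₂ := Real.rpow_nonneg hM0.le _
    have := Real.exp_pos ((p₁ + 1) * (s * R₀))
    simp only [hC₃def]; positivity
  set K : ℝ := C₂ + C₃ with hKdef
  have hK0 : 0 ≤ K := by simp only [hKdef]; linarith
  refine ⟨fun R => K * (1 + |R| ^ a) * Real.exp (-(c * max R 0)), ?_, ?_, ?_⟩
  · intro R
    have h1 : (0:ℝ) ≤ |R| ^ a := Real.rpow_nonneg (abs_nonneg _) _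
    have := (Real.exp_pos (-(c * max R 0))).le
    positivity
  · -- tendsto 0
    have t1 : Tendsto (fun R : ℝ => Real.exp (-(c * R))) atTop (nhds 0) := by
      have h := Real.tendsto_exp_neg_atTop_nhds_zero.comp
        (tendsto_id.atTop_mul_const hc0 : Tendsto (fun R : ℝ => R * c) atTop atTop)
      refine h.congr fun R => ?_
      simp [Function.comp, mul_comm]
    have t2 : Tendsto (fun R : ℝ => R ^ a * Real.exp (-c * R)) atTop (nhds 0) :=
      tendsto_rpow_mul_exp_neg_mul_atTop_nhds_zero a c hc0
    have h1 : Tendsto (fun R : ℝ => K * Real.exp (-(c * R)) + K * (R ^ a * Real.exp (-(c * R))))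
        atTop (nhds 0) := by
      have := (t1.const_mul K).add ((t2.congr (fun R => by rw [neg_mul])).const_mul K)
      simpa using this
    refine h1.congr' ?_
    filter_upwards [eventually_ge_atTop (0:ℝ)] with R hR0
    rw [abs_of_nonneg hR0, max_eq_left hR0]
    ring
  · -- main estimate
    intro τ hτ R hR
    set mτ : ℝ := max (τ ^ p₁) (τ ^ p₂) with hmτdef
    have hmτ0 : 0 ≤ mτ := le_trans (Real.rpow_nonneg hτ p₁) (le_max_left _ _)
    set F : EuclideanSpace ℝ (Fin N) → ℝ := fun x =>
      f (τ * (ξ x * w (x - R • y))) * (ξ x * w (x - R • x₀)) -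
        f (τ * w (x - R • y)) * w (x - R • x₀) with hFdef
    have hξcont : Continuous ξ := hξ.continuous
    have hw1 : Continuous fun x : EuclideanSpace ℝ (Fin N) => w (x - R • y) :=
      hwcont.comp (continuous_id.sub continuous_const)
    have hw2 : Continuous fun x : EuclideanSpace ℝ (Fin N) => w (x - R • x₀) :=
      hwcont.comp (continuous_id.sub continuous_const)
    have hFcont : Continuous F :=
      ((hfcont.comp (continuous_const.mul (hξcont.mul hw1))).mul (hξcont.mul hw2)).sub
        ((hfcont.comp (continuous_const.mul hw1)).mul hw2)
    have hFout : ∀ x ∉ closedBall (0 : EuclideanSpace ℝ (Fin N)) (2 * ρ), F x = 0 := by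
      intro x hx
      have hx' : x ∉ Metric.ball (0 : EuclideanSpace ℝ (Fin N)) (2 * ρ) :=
        fun h => hx (ball_subset_closedBall h)
      simp [hFdef, hξ1 x hx']
    have hint : ∀ C : ℝ, (∀ x ∈ closedBall (0 : EuclideanSpace ℝ (Fin N)) (2 * ρ), |F x| ≤ C) →
        |∫ x, F x| ≤ C * V := by
      intro C hC
      rw [← MeasureTheory.setIntegral_eq_integral_of_forall_compl_eq_zero hFout,
        ← Real.norm_eq_abs]
      exact norm_setIntegral_le_of_norm_le_const (f := F) (C := C) measure_closedBall_lt_top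
        (fun x hx => by rw [Real.norm_eq_abs]; exact hC x hx)
    -- pointwise estimate
    have hpoint : ∀ x, |F x| ≤
        D * mτ * (w (x - R • y) ^ p₁ + w (x - R • y) ^ p₂) * w (x - R • x₀) := by
      intro x
      obtain ⟨hξ0x, hξ1x⟩ := hξ01 x
      have hu : 0 < w (x - R • y) := hwpos _
      have hv : 0 < w (x - R • x₀) := hwpos _
      set u : ℝ := w (x - R • y)
      set v : ℝ := w (x - R • x₀)
      have hf00 : f 0 = 0 := hf0 0 le_rfl
      have hA0 : 0 ≤ f (τ * (ξ x * u)) := by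
        rw [← hf00]; exact hfmono (by positivity)
      have hAB : f (τ * (ξ x * u)) ≤ f (τ * u) := by
        apply hfmono
        have h := mul_nonneg (mul_nonneg hτ hu.le) (by linarith : (0:ℝ) ≤ 1 - ξ x)
        nlinarith [h]
      have hB0 : 0 ≤ f (τ * u) := le_trans hA0 hAB
      have hξv : ξ x * v ≤ v := by nlinarith
      have hξv0 : 0 ≤ ξ x * v := by positivity
      have hAle : f (τ * (ξ x * u)) * (ξ x * v) ≤ f (τ * u) * v :=
        mul_le_mul hAB hξv hξv0 hB0
      have hA0' : 0 ≤ f (τ * (ξ x * u)) * (ξ x * v) := mul_nonneg hA0 hξv0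
      have hB0' : 0 ≤ f (τ * u) * v := mul_nonneg hB0 hv.le
      have habs : |F x| ≤ f (τ * u) * v := by
        have hFx : F x = f (τ * (ξ x * u)) * (ξ x * v) - f (τ * u) * v := rfl
        rw [hFx, abs_le]
        constructor <;> linarith
      have hg := hfgrowth (τ * u)
      rw [abs_of_nonneg (by positivity : (0:ℝ) ≤ τ * u)] at hg
      have e1 : (τ * u) ^ p₁ = τ ^ p₁ * u ^ p₁ := Real.mul_rpow hτ hu.le
      have e2 : (τ * u) ^ p₂ = τ ^ p₂ * u ^ p₂ := Real.mul_rpow hτ hu.le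
      have hm1 : τ ^ p₁ ≤ mτ := le_max_left _ _
      have hm2 : τ ^ p₂ ≤ mτ := le_max_right _ _
      have hup1 : 0 ≤ u ^ p₁ := Real.rpow_nonneg hu.le _
      have hup2 : 0 ≤ u ^ p₂ := Real.rpow_nonneg hu.le _
      have hfb : f (τ * u) ≤ D * (mτ * (u ^ p₁ + u ^ p₂)) := by
        calc f (τ * u) ≤ |f (τ * u)| := le_abs_self _
          _ ≤ D * ((τ * u) ^ p₁ + (τ * u) ^ p₂) := by
              have := hfgrowth (τ * u)
              rwa [abs_of_nonneg (by positivity : (0:ℝ) ≤ τ * u)] at this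
          _ = D * (τ ^ p₁ * u ^ p₁ + τ ^ p₂ * u ^ p₂) := by rw [e1, e2]
          _ ≤ D * (mτ * (u ^ p₁ + u ^ p₂)) := by
              apply mul_le_mul_of_nonneg_left _ hD.le
              have t1 : τ ^ p₁ * u ^ p₁ ≤ mτ * u ^ p₁ := mul_le_mul_of_nonneg_right hm1 hup1
              have t2 : τ ^ p₂ * u ^ p₂ ≤ mτ * u ^ p₂ := mul_le_mul_of_nonneg_right hm2 hup2
              have t3 : mτ * (u ^ p₁ + u ^ p₂) = mτ * u ^ p₁ + mτ * u ^ p₂ := by ring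
              linarith
      calc |F x| ≤ f (τ * u) * v := habs
        _ ≤ D * (mτ * (u ^ p₁ + u ^ p₂)) * v := mul_le_mul_of_nonneg_right hfb hv.le
        _ = D * mτ * (u ^ p₁ + u ^ p₂) * v := by ring
    -- lower bound for distances
    have hy1 : 1 ≤ ‖y‖ := by
      have h := norm_sub_le y x₀
      rw [hy, hx₀] at h; linarith
    have hdist : ∀ q : EuclideanSpace ℝ (Fin N), 1 ≤ ‖q‖ →
        ∀ x ∈ closedBall (0 : EuclideanSpace ℝ (Fin N)) (2 * ρ), R - 2 * ρ ≤ ‖x - R • q‖ := by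
      intro q hq x hx
      simp only [mem_closedBall, dist_zero_right] at hx
      have h1 : ‖R • q‖ - ‖x‖ ≤ ‖R • q - x‖ := norm_sub_norm_le _ _
      rw [norm_sub_rev] at h1
      have h2 : ‖R • q‖ = R * ‖q‖ := by
        rw [norm_smul, Real.norm_eq_abs, abs_of_pos hR]
      rw [h2] at h1
      have h3 : R * 1 ≤ R * ‖q‖ := mul_le_mul_of_nonneg_left hq hR.le
      linarith
    have hx₀1 : 1 ≤ ‖x₀‖ := hx₀.ge
    -- common algebraic facts
    set G : ℝ := Real.exp (-((p₁ + 1) * (s * R))) with hGdef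
    have hG0 : 0 < G := Real.exp_pos _
    have hRaa : R ^ a * R ^ (-a) = 1 := by
      rw [← Real.rpow_add hR]; simp
    have hexpsum : Real.exp (-(c * R)) * Real.exp (-(2 * R * s)) = G := by
      rw [← Real.exp_add, hGdef]; congr 1; rw [hcdef]; ring
    have hRa0 : 0 ≤ R ^ a := Real.rpow_nonneg hR.le _
    have hRna0 : 0 ≤ R ^ (-a) := Real.rpow_nonneg hR.le _
    simp only [abs_of_pos hR, max_eq_left hR.le]
    have key : mτ * K * G ≤
        mτ * (K * (1 + R ^ a) * Real.exp (-(c * R))) * R ^ (-a) * Real.exp (-(2 * R * s)) := by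
      have h2 : 0 ≤ mτ * K * (Real.exp (-(c * R)) * Real.exp (-(2 * R * s))) * R ^ (-a) :=
        mul_nonneg (mul_nonneg (mul_nonneg hmτ0 hK0)
          (mul_nonneg (Real.exp_pos _).le (Real.exp_pos _).le)) hRna0
      calc mτ * K * G
          = mτ * K * (R ^ a * R ^ (-a)) * (Real.exp (-(c * R)) * Real.exp (-(2 * R * s))) := by
            rw [hRaa, hexpsum]; ring
        _ ≤ mτ * K * (R ^ a * R ^ (-a)) * (Real.exp (-(c * R)) * Real.exp (-(2 * R * s))) +
              mτ * K * (Real.exp (-(c * R)) * Real.exp (-(2 * R * s))) * R ^ (-a) :=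
            le_add_of_nonneg_right h2
        _ = mτ * (K * (1 + R ^ a) * Real.exp (-(c * R))) * R ^ (-a) *
              Real.exp (-(2 * R * s)) := by ring
    rcases le_or_gt R₀ R with hRR | hRR
    · -- large R
      set E₁ : ℝ := Real.exp (-(s * (R - 2 * ρ))) with hE₁def
      have hE₁0 : 0 < E₁ := Real.exp_pos _
      have hwb : ∀ q : EuclideanSpace ℝ (Fin N), 1 ≤ ‖q‖ →
          ∀ x ∈ closedBall (0 : EuclideanSpace ℝ (Fin N)) (2 * ρ),
            w (x - R • q) ≤ (σ + 1) * E₁ := by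
        intro q hq x hx
        have hz := hdist q hq x hx
        have hr₀z : r₀ ≤ ‖x - R • q‖ := by
          have : r₀ ≤ R - 2 * ρ := by rw [hR₀def] at hRR; linarith
          linarith
        calc w (x - R • q) ≤ (σ + 1) * Real.exp (-(s * ‖x - R • q‖)) := hdecay _ hr₀z
          _ ≤ (σ + 1) * E₁ := by
              apply mul_le_mul_of_nonneg_left _ hσ1.le
              rw [hE₁def]
              apply Real.exp_le_exp.mpr
              nlinarith
      set Mq : ℝ := M ^ (p₂ - p₁) with hMqdef
      have hMq0 : 0 ≤ Mq := Real.rpow_nonneg hM0.le _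
      set Sp : ℝ := (σ + 1) ^ p₁ with hSpdef
      have hSp0 : 0 ≤ Sp := Real.rpow_nonneg hσ1.le _
      set E₁p : ℝ := E₁ ^ p₁ with hE₁pdef
      have hE₁p0 : 0 ≤ E₁p := Real.rpow_nonneg hE₁0.le _
      set Cpt : ℝ := D * mτ * ((1 + Mq) * (Sp * E₁p)) * ((σ + 1) * E₁) with hCptdef
      have hCb : ∀ x ∈ closedBall (0 : EuclideanSpace ℝ (Fin N)) (2 * ρ), |F x| ≤ Cpt := by
        intro x hx
        have hu : 0 < w (x - R • y) := hwpos _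
        have hv : 0 < w (x - R • x₀) := hwpos _
        have hub : w (x - R • y) ≤ (σ + 1) * E₁ := hwb y hy1 x hx
        have hvb : w (x - R • x₀) ≤ (σ + 1) * E₁ := hwb x₀ hx₀1 x hx
        set u : ℝ := w (x - R • y)
        set v : ℝ := w (x - R • x₀)
        have hup1 : u ^ p₁ ≤ Sp * E₁p := by
          calc u ^ p₁ ≤ ((σ + 1) * E₁) ^ p₁ := Real.rpow_le_rpow hu.le hub (by linarith)
            _ = Sp * E₁p := by rw [hSpdef, hE₁pdef, ← Real.mul_rpow hσ1.le hE₁0.le]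
        have hsplit : u ^ p₂ = u ^ (p₂ - p₁) * u ^ p₁ := by
          rw [← Real.rpow_add hu]; congr 1; ring
        have huq : u ^ (p₂ - p₁) ≤ Mq :=
          Real.rpow_le_rpow hu.le (hMw _) (by linarith)
        have hup2 : u ^ p₂ ≤ Mq * (Sp * E₁p) := by
          rw [hsplit]
          exact mul_le_mul huq hup1 (Real.rpow_nonneg hu.le _) hMq0
        have hsum : u ^ p₁ + u ^ p₂ ≤ (1 + Mq) * (Sp * E₁p) := by
          have hx1 : (1 + Mq) * (Sp * E₁p) = Sp * E₁p + Mq * (Sp * E₁p) := by ring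
          linarith
        calc |F x| ≤ D * mτ * (u ^ p₁ + u ^ p₂) * v := hpoint x
          _ ≤ D * mτ * ((1 + Mq) * (Sp * E₁p)) * ((σ + 1) * E₁) := by
              refine mul_le_mul (mul_le_mul_of_nonneg_left hsum (mul_nonneg hD.le hmτ0))
                hvb hv.le ?_
              have h9 : 0 ≤ (1 + Mq) * (Sp * E₁p) := by positivity
              exact mul_nonneg (mul_nonneg hD.le hmτ0) h9
          _ = Cpt := by rw [hCptdef]
      have eE : E₁p * E₁ = Real.exp ((p₁ + 1) * (s * (2 * ρ))) * G := by
        rw [hE₁pdef, hE₁def, ← Real.exp_mul, hGdef, ← Real.exp_add, ← Real.exp_add]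
        congr 1; ring
      calc |∫ x, F x| ≤ Cpt * V := hint Cpt hCb
        _ = mτ * (V * D * (1 + Mq) * Sp * (σ + 1)) * (E₁p * E₁) := by
            rw [hCptdef]; ring
        _ = mτ * C₂ * G := by
            rw [eE, hC₂def, hSpdef, hMqdef]; ring
        _ ≤ mτ * K * G := by
            have h := mul_nonneg (mul_nonneg hmτ0 hC₃0) hG0.le
            have hx1 : mτ * K * G = mτ * C₂ * G + mτ * C₃ * G := by rw [hKdef]; ring
            linarith
        _ ≤ mτ * (K * (1 + R ^ a) * Real.exp (-(c * R))) * R ^ (-a) *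
              Real.exp (-(2 * R * s)) := key
    · -- small R
      have hMp1 : 0 ≤ M ^ p₁ := Real.rpow_nonneg hM0.le _
      have hMp2 : 0 ≤ M ^ p₂ := Real.rpow_nonneg hM0.le _
      set Cpt : ℝ := D * mτ * (M ^ p₁ + M ^ p₂) * M with hCptdef
      have hCb : ∀ x ∈ closedBall (0 : EuclideanSpace ℝ (Fin N)) (2 * ρ), |F x| ≤ Cpt := by
        intro x _
        have hu : 0 < w (x - R • y) := hwpos _
        have hv : 0 < w (x - R • x₀) := hwpos _
        have hub : w (x - R • y) ≤ M := hMw _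
        have hvb : w (x - R • x₀) ≤ M := hMw _
        have hup1 : w (x - R • y) ^ p₁ ≤ M ^ p₁ := Real.rpow_le_rpow hu.le hub (by linarith)
        have hup2 : w (x - R • y) ^ p₂ ≤ M ^ p₂ := Real.rpow_le_rpow hu.le hub (by linarith)
        calc |F x| ≤ D * mτ * (w (x - R • y) ^ p₁ + w (x - R • y) ^ p₂) * w (x - R • x₀) :=
              hpoint x
          _ ≤ D * mτ * (M ^ p₁ + M ^ p₂) * M := by
              refine mul_le_mul (mul_le_mul_of_nonneg_left (by linarith)
                (mul_nonneg hD.le hmτ0)) hvb hv.le ?_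
              exact mul_nonneg (mul_nonneg hD.le hmτ0) (by linarith)
          _ = Cpt := by rw [hCptdef]
      have hone : Real.exp ((p₁ + 1) * (s * R₀)) * Real.exp (-((p₁ + 1) * (s * R₀))) = 1 := by
        rw [← Real.exp_add]; simp
      have hGR₀ : Real.exp (-((p₁ + 1) * (s * R₀))) ≤ G := by
        rw [hGdef]
        apply Real.exp_le_exp.mpr
        have h1 : 0 < (p₁ + 1) * s := mul_pos (by linarith) hs0
        have h2 := mul_le_mul_of_nonneg_left hRR.le h1.le
        nlinarith [h2]
      calc |∫ x, F x| ≤ Cpt * V := hint Cpt hCb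
        _ = mτ * C₃ * Real.exp (-((p₁ + 1) * (s * R₀))) := by
            rw [hCptdef, hC₃def]
            linear_combination (-(mτ * (V * D * (M ^ p₁ + M ^ p₂) * M))) * hone
        _ ≤ mτ * C₃ * G := by
            have h0 : 0 ≤ mτ * C₃ := mul_nonneg hmτ0 hC₃0
            exact mul_le_mul_of_nonneg_left hGR₀ h0
        _ ≤ mτ * K * G := by
            have h := mul_nonneg (mul_nonneg hmτ0 hC₂0) hG0.le
            have hx1 : mτ * K * G = mτ * C₂ * G + mτ * C₃ * G := by rw [hKdef]; ring
            linarith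
        _ ≤ mτ * (K * (1 + R ^ a) * Real.exp (-(c * R))) * R ^ (-a) *
              Real.exp (-(2 * R * s)) := key
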